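/- For every natural number i ≥ 0 and all subspaces p₁, q₁, r₁, …, p_{i+1}, q_{i+1}, r_{i+1} of ℂ^{2^i} (i.e., of EuclideanSpace ℂ (Fin (2^i))), the iterated restricted distributivity test formula satisfies α^{i+1}(p_{i+1},q_{i+1},r_{i+1}) = ⊥. -/

import Mathlib

/-- The distributivity test formula `α(p,q,r) = (a ⊔ b) ⊓ (aᗮ ⊔ bᗮ)` where
`a = p ⊔ (q ⊓ r)` and `b = (p ⊔ q) ⊓ (p ⊔ r)`. -/
noncomputable def distribTest {E : Type*} [NormedAddCommGroup E] [InnerProductSpace ℂ E]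
    (p q r : Submodule ℂ E) : Submodule ℂ E :=
  ((p ⊔ (q ⊓ r)) ⊔ ((p ⊔ q) ⊓ (p ⊔ r))) ⊓ ((p ⊔ (q ⊓ r))ᗮ ⊔ ((p ⊔ q) ⊓ (p ⊔ r))ᗮ)

/-- The restriction `α|_γ(p,q,r)` of the distributivity test formula to `γ`:
write `α` in negation normal form `((p ⊔ q) ⊓ (p ⊔ r)) ⊓ (pᗮ ⊓ (qᗮ ⊔ rᗮ))` and
replace each variable `x` by `x ⊓ γ` and each negated variable `xᗮ` by `xᗮ ⊓ γ`. -/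
noncomputable def distribTestRes {E : Type*} [NormedAddCommGroup E] [InnerProductSpace ℂ E]
    (γ p q r : Submodule ℂ E) : Submodule ℂ E :=
  (((p ⊓ γ) ⊔ (q ⊓ γ)) ⊓ ((p ⊓ γ) ⊔ (r ⊓ γ))) ⊓ ((pᗮ ⊓ γ) ⊓ ((qᗮ ⊓ γ) ⊔ (rᗮ ⊓ γ)))

/-- The iterated restricted distributivity test formula:
`distribTestIter p q r m` is `α^(m+1)(p (m+1), q (m+1), r (m+1))`, where
`α¹(p₁,q₁,r₁) = α(p₁,q₁,r₁)` and `αᵐ(pₘ,qₘ,rₘ) = α|_(α^(m-1))(pₘ,qₘ,rₘ)`.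
The variables `pⱼ, qⱼ, rⱼ` (for `1 ≤ j ≤ m+1`) are given as `p j, q j, r j`. -/
noncomputable def distribTestIter {E : Type*} [NormedAddCommGroup E] [InnerProductSpace ℂ E]
    (p q r : ℕ → Submodule ℂ E) : ℕ → Submodule ℂ E
  | 0 => distribTest (p 1) (q 1) (r 1)
  | (m + 1) => distribTestRes (distribTestIter p q r m) (p (m + 2)) (q (m + 2)) (r (m + 2))

section Aux
variable {E : Type*} [NormedAddCommGroup E] [InnerProductSpace ℂ E] [FiniteDimensional ℂ E]

/-- dim ((x⊔y)⊓(x⊔z)) ≤ dim (x⊔(y⊓z)) + dim x. -/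
lemma dimB_le (x y z : Submodule ℂ E) :
    Module.finrank ℂ ((x ⊔ y) ⊓ (x ⊔ z) : Submodule ℂ E)
      ≤ Module.finrank ℂ (x ⊔ (y ⊓ z) : Submodule ℂ E) + Module.finrank ℂ x := by
  have e : (x ⊔ y) ⊔ (x ⊔ z) = x ⊔ (y ⊔ z) := by
    rw [sup_sup_sup_comm, sup_idem]
  have h1 := Submodule.finrank_sup_add_finrank_inf_eq (x ⊔ y) (x ⊔ z)
  rw [e] at h1
  have h2 := Submodule.finrank_sup_add_finrank_inf_eq x (y ⊓ z)
  have h3 := Submodule.finrank_sup_add_finrank_inf_eq x y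
  have h4 := Submodule.finrank_sup_add_finrank_inf_eq x z
  have h5 := Submodule.finrank_sup_add_finrank_inf_eq y z
  have m1 : Module.finrank ℂ (y ⊔ z : Submodule ℂ E)
      ≤ Module.finrank ℂ (x ⊔ (y ⊔ z) : Submodule ℂ E) :=
    Submodule.finrank_mono le_sup_right
  have m2 : Module.finrank ℂ (x ⊓ (y ⊓ z) : Submodule ℂ E)
      ≤ Module.finrank ℂ (x ⊓ y : Submodule ℂ E) :=
    Submodule.finrank_mono (inf_le_inf_left x inf_le_left)
  have m3 : Module.finrank ℂ (x ⊓ (y ⊓ z) : Submodule ℂ E)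
      ≤ Module.finrank ℂ (x ⊓ z : Submodule ℂ E) :=
    Submodule.finrank_mono (inf_le_inf_left x inf_le_right)
  omega

/-- If `s ⊓ t = ⊥` and `s ⊔ t ≤ u` then `dim s + dim t ≤ dim u`. -/
lemma dim_add_le (s t u : Submodule ℂ E) (hst : s ⊓ t = ⊥) (h : s ⊔ t ≤ u) :
    Module.finrank ℂ s + Module.finrank ℂ t ≤ Module.finrank ℂ u := by
  have h1 := Submodule.finrank_sup_add_finrank_inf_eq s t
  rw [hst] at h1
  simp only [finrank_bot, add_zero] at h1
  rw [← h1]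
  exact Submodule.finrank_mono h

/-- Key lemma: any subspace `t` satisfying the structural properties of the
restricted distributivity test inside `γ` has `2·dim t ≤ dim γ`. -/
lemma key (γ p q r t : Submodule ℂ E)
    (hb : t ≤ ((p ⊓ γ) ⊔ (q ⊓ γ)) ⊓ ((p ⊓ γ) ⊔ (r ⊓ γ)))
    (hp : t ≤ pᗮ) (hγ : t ≤ γ)
    (ha : t ⊓ ((p ⊓ γ) ⊔ ((q ⊓ γ) ⊓ (r ⊓ γ))) = ⊥) :
    2 * Module.finrank ℂ t ≤ Module.finrank ℂ γ := by
  set x := p ⊓ γ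
  set y := q ⊓ γ
  set z := r ⊓ γ
  -- dim t + dim (x ⊔ (y⊓z)) ≤ dim ((x⊔y)⊓(x⊔z))
  have step1 : Module.finrank ℂ t + Module.finrank ℂ (x ⊔ (y ⊓ z) : Submodule ℂ E)
      ≤ Module.finrank ℂ ((x ⊔ y) ⊓ (x ⊔ z) : Submodule ℂ E) := by
    refine dim_add_le _ _ _ ha (sup_le hb ?_)
    exact le_inf (sup_le le_sup_left (le_trans inf_le_left le_sup_right))
      (sup_le le_sup_left (le_trans inf_le_right le_sup_right))
  have step2 := dimB_le x y z
  have step3 : Module.finrank ℂ t ≤ Module.finrank ℂ x := by omega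
  -- dim t + dim x ≤ dim γ
  have step4 : Module.finrank ℂ t + Module.finrank ℂ x ≤ Module.finrank ℂ γ := by
    refine dim_add_le _ _ _ ?_ (sup_le hγ inf_le_right)
    have : t ⊓ x ≤ pᗮ ⊓ p := inf_le_inf hp inf_le_left
    rw [inf_comm (a := pᗮ)] at this
    exact le_antisymm (this.trans_eq (Submodule.inf_orthogonal_eq_bot p)) bot_le
  omega

lemma distribTest_bound (p q r : Submodule ℂ E) :
    2 * Module.finrank ℂ (distribTest p q r) ≤ Module.finrank ℂ E := by
  set a := p ⊔ (q ⊓ r) with hadef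
  set b := (p ⊔ q) ⊓ (p ⊔ r) with hbdef
  have hab : a ≤ b := by
    refine sup_le (le_inf le_sup_left le_sup_left) ?_
    exact le_inf (le_trans inf_le_left le_sup_right) (le_trans inf_le_right le_sup_right)
  have e1 : a ⊔ b = b := sup_eq_right.mpr hab
  have e2 : aᗮ ⊔ bᗮ = aᗮ := sup_eq_left.mpr (Submodule.orthogonal_le hab)
  have hαb : distribTest p q r ≤ b := by
    rw [distribTest, ← hadef, ← hbdef, e1]; exact inf_le_left
  have hαa : distribTest p q r ≤ aᗮ := by
    rw [distribTest, ← hadef, ← hbdef, e2]; exact inf_le_right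
  have h := key ⊤ p q r (distribTest p q r) ?_ ?_ le_top ?_
  · rwa [finrank_top ℂ E] at h
  · simpa only [inf_top_eq] using hαb
  · exact hαa.trans (Submodule.orthogonal_le le_sup_left)
  · simp only [inf_top_eq]
    refine le_antisymm ?_ bot_le
    have : distribTest p q r ⊓ a ≤ aᗮ ⊓ a := inf_le_inf hαa le_rfl
    rw [inf_comm (a := aᗮ)] at this
    exact this.trans_eq (Submodule.inf_orthogonal_eq_bot a)

lemma distribTestRes_bound (γ p q r : Submodule ℂ E) :
    2 * Module.finrank ℂ (distribTestRes γ p q r) ≤ Module.finrank ℂ γ := by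
  set t := distribTestRes γ p q r with htdef
  have hb : t ≤ ((p ⊓ γ) ⊔ (q ⊓ γ)) ⊓ ((p ⊓ γ) ⊔ (r ⊓ γ)) := inf_le_left
  have hp : t ≤ pᗮ := le_trans inf_le_right (le_trans inf_le_left inf_le_left)
  have hγ : t ≤ γ := le_trans inf_le_right (le_trans inf_le_left inf_le_right)
  have hqr : t ≤ qᗮ ⊔ rᗮ := le_trans inf_le_right (le_trans inf_le_right
    (sup_le_sup inf_le_left inf_le_left))
  refine key γ p q r t hb hp hγ ?_
  -- t ≤ ((p⊓γ) ⊔ ((q⊓γ)⊓(r⊓γ)))ᗮ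
  have h1 : t ≤ ((p ⊓ γ) ⊔ ((q ⊓ γ) ⊓ (r ⊓ γ)))ᗮ := by
    rw [← Submodule.inf_orthogonal]
    refine le_inf (hp.trans (Submodule.orthogonal_le inf_le_left)) ?_
    refine hqr.trans (sup_le ?_ ?_)
    · exact Submodule.orthogonal_le (le_trans inf_le_left inf_le_left)
    · exact Submodule.orthogonal_le (le_trans inf_le_right inf_le_left)
  refine le_antisymm ?_ bot_le
  have : t ⊓ ((p ⊓ γ) ⊔ ((q ⊓ γ) ⊓ (r ⊓ γ)))
      ≤ ((p ⊓ γ) ⊔ ((q ⊓ γ) ⊓ (r ⊓ γ)))ᗮ ⊓ ((p ⊓ γ) ⊔ ((q ⊓ γ) ⊓ (r ⊓ γ))) :=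
    inf_le_inf h1 le_rfl
  rw [inf_comm (a := ((p ⊓ γ) ⊔ ((q ⊓ γ) ⊓ (r ⊓ γ)))ᗮ)] at this
  exact this.trans_eq (Submodule.inf_orthogonal_eq_bot _)

lemma distribTestIter_bound (p q r : ℕ → Submodule ℂ E) (m : ℕ) :
    2 ^ (m + 1) * Module.finrank ℂ (distribTestIter p q r m) ≤ Module.finrank ℂ E := by
  induction m with
  | zero => rw [distribTestIter]; simpa using distribTest_bound (p 1) (q 1) (r 1)
  | succ m ih =>
      have h := distribTestRes_bound (distribTestIter p q r m) (p (m + 2)) (q (m + 2)) (r (m + 2))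
      calc 2 ^ (m + 2) * Module.finrank ℂ (distribTestIter p q r (m + 1))
          = 2 ^ (m + 1) * (2 * Module.finrank ℂ
              (distribTestRes (distribTestIter p q r m) (p (m + 2)) (q (m + 2)) (r (m + 2)))) := by
            rw [distribTestIter]; ring
        _ ≤ 2 ^ (m + 1) * Module.finrank ℂ (distribTestIter p q r m) :=
            Nat.mul_le_mul_left _ h
        _ ≤ Module.finrank ℂ E := ih

end Aux

theorem distribTestIter_eq_bot (i : ℕ)
    (p q r : ℕ → Submodule ℂ (EuclideanSpace ℂ (Fin (2 ^ i)))) :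
    distribTestIter p q r i = ⊥ := by
  have h := distribTestIter_bound p q r i
  rw [show Module.finrank ℂ (EuclideanSpace ℂ (Fin (2 ^ i))) = 2 ^ i by simp] at h
  have hz : Module.finrank ℂ (distribTestIter p q r i) = 0 := by
    by_contra hne
    have h1 : 1 ≤ Module.finrank ℂ (distribTestIter p q r i) := Nat.one_le_iff_ne_zero.mpr hne
    have h2 : 2 ^ (i + 1) * 1 ≤ 2 ^ (i + 1) * Module.finrank ℂ (distribTestIter p q r i) :=
      Nat.mul_le_mul_left _ h1
    have h3 : (2 : ℕ) ^ (i + 1) ≤ 2 ^ i := by omega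
    have h4 : (2 : ℕ) ^ i < 2 ^ (i + 1) := Nat.pow_lt_pow_succ (by norm_num)
    omega
  exact Submodule.finrank_eq_zero.mp hz
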